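/- Given constants D > 0 and κ_a > 0, define φ(τ) = κ_a/√(πDτ) − (κ_a²/D)·erfcx(κ_a·√(τ/D)) for τ > 0. Then for every s > 0, the Laplace transform of φ satisfies ∫_0^∞ e^{−sτ}·φ(τ) dτ = κ_a / (κ_a + √(Ds)). -/

import Mathlib

open Real MeasureTheory Set

open Filter Topology

/-- The complementary error function `erfc x = (2/√π) ∫_x^∞ e^{-t²} dt`. -/
noncomputable def erfc (x : ℝ) : ℝ := (2 / Real.sqrt π) * ∫ t in Set.Ioi x, Real.exp (-t ^ 2)

/-- The scaled complementary error function `erfcx x = e^{x²} erfc x`. -/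
noncomputable def erfcx (x : ℝ) : ℝ := Real.exp (x ^ 2) * erfc x

/-- The first-adsorption-time density
`φ(τ) = κ_a/√(πDτ) − (κ_a²/D) erfcx(κ_a √(τ/D))`. -/
noncomputable def phi (D κa τ : ℝ) : ℝ :=
  κa / Real.sqrt (π * D * τ) - (κa ^ 2 / D) * erfcx (κa * Real.sqrt (τ / D))

lemma integrable_gauss : Integrable (fun t : ℝ => Real.exp (-t ^ 2)) := by
  simpa using integrable_exp_neg_mul_sq (one_pos (α := ℝ))

lemma gauss_Ioi_eq (x : ℝ) :
    ∫ t in Set.Ioi x, Real.exp (-t ^ 2)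
      = (∫ t in Set.Ioi (0:ℝ), Real.exp (-t ^ 2)) - ∫ t in (0:ℝ)..x, Real.exp (-t ^ 2) := by
  rcases le_total 0 x with h | h
  · rw [intervalIntegral.integral_of_le h, ← Set.Ioc_union_Ioi_eq_Ioi h,
      setIntegral_union (Set.Ioc_disjoint_Ioi le_rfl) measurableSet_Ioi
        integrable_gauss.integrableOn integrable_gauss.integrableOn]
    ring
  · rw [intervalIntegral.integral_of_ge h, ← Set.Ioc_union_Ioi_eq_Ioi h,
      setIntegral_union (Set.Ioc_disjoint_Ioi le_rfl) measurableSet_Ioi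
        integrable_gauss.integrableOn integrable_gauss.integrableOn]
    ring

lemma hasDerivAt_erfc (x : ℝ) :
    HasDerivAt erfc (-(2 / Real.sqrt π) * Real.exp (-x ^ 2)) x := by
  have hc : Continuous fun t : ℝ => Real.exp (-t ^ 2) := by continuity
  have hd : HasDerivAt (fun y : ℝ => ∫ t in (0:ℝ)..y, Real.exp (-t ^ 2))
      (Real.exp (-x ^ 2)) x :=
    intervalIntegral.integral_hasDerivAt_right
      (integrable_gauss.intervalIntegrable)
      (hc.stronglyMeasurable.stronglyMeasurableAtFilter) hc.continuousAt
  have h2 : HasDerivAt (fun y : ℝ =>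
      (2 / Real.sqrt π) * ((∫ t in Set.Ioi (0:ℝ), Real.exp (-t ^ 2))
        - ∫ t in (0:ℝ)..y, Real.exp (-t ^ 2)))
      ((2 / Real.sqrt π) * (-Real.exp (-x ^ 2))) x := (hd.const_sub _).const_mul _
  have heq : erfc = fun y : ℝ =>
      (2 / Real.sqrt π) * ((∫ t in Set.Ioi (0:ℝ), Real.exp (-t ^ 2))
        - ∫ t in (0:ℝ)..y, Real.exp (-t ^ 2)) :=
    funext fun y => by unfold erfc; rw [gauss_Ioi_eq]
  rw [heq]
  convert h2 using 1
  ring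

lemma continuous_erfc : Continuous erfc :=
  continuous_iff_continuousAt.2 fun x => (hasDerivAt_erfc x).continuousAt

lemma erfc_zero : erfc 0 = 1 := by
  have h := integral_gaussian_Ioi 1
  simp only [div_one, neg_mul, one_mul] at h
  unfold erfc
  rw [h]
  have : Real.sqrt π ≠ 0 := by positivity
  field_simp

lemma erfc_nonneg (x : ℝ) : 0 ≤ erfc x := by
  unfold erfc
  have : 0 ≤ ∫ t in Set.Ioi x, Real.exp (-t ^ 2) :=
    setIntegral_nonneg measurableSet_Ioi fun t _ => (Real.exp_pos _).le
  positivity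

lemma integral_exp_shift (x : ℝ) (hx : 0 < x) :
    ∫ t in Set.Ioi x, Real.exp (x ^ 2 - 2 * x * t) = Real.exp (-x ^ 2) / (2 * x) := by
  have hderiv : ∀ t ∈ Set.Ioi x, HasDerivAt
      (fun t => -Real.exp (x ^ 2 - 2 * x * t) / (2 * x))
      (Real.exp (x ^ 2 - 2 * x * t)) t := by
    intro t _
    have h1 : HasDerivAt (fun t : ℝ => x ^ 2 - 2 * x * t) (-(2 * x)) t := by
      simpa using ((hasDerivAt_id t).const_mul (2 * x)).const_sub (x ^ 2)
    have h2 := (h1.exp.neg).div_const (2 * x)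
    refine h2.congr_deriv ?_
    symm
    rw [mul_neg, neg_neg, mul_div_assoc, div_self (by positivity), mul_one]
  have hlin : Tendsto (fun t : ℝ => x ^ 2 - 2 * x * t) atTop atBot := by
    have h1 : Tendsto (fun t : ℝ => 2 * x * t) atTop atTop :=
      (tendsto_const_mul_atTop_of_pos (by positivity)).2 tendsto_id
    simpa [sub_eq_add_neg] using tendsto_atBot_add_const_left atTop (x ^ 2)
      (tendsto_neg_atTop_atBot.comp h1)
  have htend : Tendsto (fun t => -Real.exp (x ^ 2 - 2 * x * t) / (2 * x)) atTop (𝓝 0) := by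
    have := ((Real.tendsto_exp_atBot.comp hlin).neg).div_const (2 * x)
    simpa using this
  have hcont : ContinuousWithinAt (fun t => -Real.exp (x ^ 2 - 2 * x * t) / (2 * x))
      (Set.Ici x) x :=
    (((Real.continuous_exp.comp (by continuity)).neg.div_const (2 * x)).continuousWithinAt)
  have hint : IntegrableOn (fun t : ℝ => Real.exp (x ^ 2 - 2 * x * t)) (Set.Ioi x) := by
    have : (fun t : ℝ => Real.exp (x ^ 2 - 2 * x * t))
        = fun t => Real.exp (x ^ 2) * Real.exp (-(2 * x) * t) := by
      funext t; rw [← Real.exp_add]; ring_nf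
    rw [this]
    exact (exp_neg_integrableOn_Ioi x (by positivity)).const_mul _
  have := integral_Ioi_of_hasDerivAt_of_tendsto hcont hderiv hint htend
  rw [this, zero_sub]
  simp only [neg_div, neg_neg]
  rw [show x ^ 2 - 2 * x * x = -x ^ 2 by ring]

lemma erfc_le (x : ℝ) (hx : 0 < x) :
    erfc x ≤ Real.exp (-x ^ 2) / (Real.sqrt π * x) := by
  have hmono : ∫ t in Set.Ioi x, Real.exp (-t ^ 2)
      ≤ ∫ t in Set.Ioi x, Real.exp (x ^ 2 - 2 * x * t) := by
    apply setIntegral_mono_on integrable_gauss.integrableOn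
    · have : (fun t : ℝ => Real.exp (x ^ 2 - 2 * x * t))
          = fun t => Real.exp (x ^ 2) * Real.exp (-(2 * x) * t) := by
        funext t; rw [← Real.exp_add]; ring_nf
      rw [this]
      exact (exp_neg_integrableOn_Ioi x (by positivity)).const_mul _
    · exact measurableSet_Ioi
    · intro t _
      apply Real.exp_le_exp.2
      nlinarith [sq_nonneg (x - t)]
  have h2 := integral_exp_shift x hx
  unfold erfc
  calc (2 / Real.sqrt π) * ∫ t in Set.Ioi x, Real.exp (-t ^ 2)
      ≤ (2 / Real.sqrt π) * (Real.exp (-x ^ 2) / (2 * x)) := by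
        rw [← h2]
        exact mul_le_mul_of_nonneg_left hmono (by positivity)
    _ = Real.exp (-x ^ 2) / (Real.sqrt π * x) := by
        have : Real.sqrt π ≠ 0 := by positivity
        field_simp

lemma erfcx_nonneg (x : ℝ) : 0 ≤ erfcx x :=
  mul_nonneg (Real.exp_pos _).le (erfc_nonneg x)

lemma erfcx_le (x : ℝ) (hx : 0 < x) : erfcx x ≤ 1 / (Real.sqrt π * x) := by
  unfold erfcx
  calc Real.exp (x ^ 2) * erfc x
      ≤ Real.exp (x ^ 2) * (Real.exp (-x ^ 2) / (Real.sqrt π * x)) :=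
        mul_le_mul_of_nonneg_left (erfc_le x hx) (Real.exp_pos _).le
    _ = 1 / (Real.sqrt π * x) := by
        rw [mul_div_assoc', ← Real.exp_add]
        simp

noncomputable def f0 (a τ : ℝ) : ℝ :=
  a / (Real.sqrt π * Real.sqrt τ) - a ^ 2 * erfcx (a * Real.sqrt τ)

lemma f0_nonneg (a : ℝ) (ha : 0 < a) {τ : ℝ} (hτ : 0 < τ) : 0 ≤ f0 a τ := by
  have hsτ : 0 < Real.sqrt τ := Real.sqrt_pos.2 hτ
  have h := erfcx_le (a * Real.sqrt τ) (by positivity)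
  have h2 : a ^ 2 * erfcx (a * Real.sqrt τ) ≤ a ^ 2 * (1 / (Real.sqrt π * (a * Real.sqrt τ))) :=
    mul_le_mul_of_nonneg_left h (sq_nonneg a)
  have h3 : a ^ 2 * (1 / (Real.sqrt π * (a * Real.sqrt τ))) = a / (Real.sqrt π * Real.sqrt τ) := by
    have hπ : Real.sqrt π ≠ 0 := by positivity
    field_simp
  unfold f0
  linarith [h2, h3.le]

lemma exp_tendsto_zero {s : ℝ} (hs : 0 < s) :
    Tendsto (fun τ : ℝ => Real.exp (-s * τ)) atTop (𝓝 0) := by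
  apply Real.tendsto_exp_atBot.comp
  have h1 : Tendsto (fun τ : ℝ => s * τ) atTop atTop :=
    (tendsto_const_mul_atTop_of_pos hs).2 tendsto_id
  exact (tendsto_neg_atTop_atBot.comp h1).congr fun τ => by simp [Function.comp, neg_mul]

lemma core (a s : ℝ) (ha : 0 < a) (hs : 0 < s) (hne : s ≠ a ^ 2) :
    IntegrableOn (fun τ => Real.exp (-s * τ) * f0 a τ) (Set.Ioi 0) ∧
    ∫ τ in Set.Ioi (0:ℝ), Real.exp (-s * τ) * f0 a τ = a / (Real.sqrt s + a) := by
  have hπ : (0:ℝ) < Real.sqrt π := Real.sqrt_pos.2 Real.pi_pos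
  have hss : 0 < Real.sqrt s := Real.sqrt_pos.2 hs
  set A : ℝ := a ^ 2 / (s - a ^ 2) with hA
  set B : ℝ := a * Real.sqrt s / (s - a ^ 2) with hB
  set F : ℝ → ℝ := fun u => A * (Real.exp ((a ^ 2 - s) * u) * erfc (a * Real.sqrt u))
      - B * erfc (Real.sqrt s * Real.sqrt u) with hF
  have hsub : s - a ^ 2 ≠ 0 := sub_ne_zero.2 hne
  -- derivative
  have hderiv : ∀ τ ∈ Set.Ioi (0:ℝ), HasDerivAt F (Real.exp (-s * τ) * f0 a τ) τ := by
    intro τ hτ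
    have hτ0 : (0:ℝ) < τ := hτ
    have hsτ : 0 < Real.sqrt τ := Real.sqrt_pos.2 hτ0
    have hsqrt : HasDerivAt Real.sqrt (1 / (2 * Real.sqrt τ)) τ := Real.hasDerivAt_sqrt hτ0.ne'
    have h1 : HasDerivAt (fun u => a * Real.sqrt u) (a * (1 / (2 * Real.sqrt τ))) τ :=
      hsqrt.const_mul a
    have h2 : HasDerivAt (fun u => erfc (a * Real.sqrt u))
        (-(2 / Real.sqrt π) * Real.exp (-(a * Real.sqrt τ) ^ 2) * (a * (1 / (2 * Real.sqrt τ)))) τ :=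
      (hasDerivAt_erfc _).comp τ h1
    have h3 : HasDerivAt (fun u : ℝ => Real.exp ((a ^ 2 - s) * u))
        ((a ^ 2 - s) * Real.exp ((a ^ 2 - s) * τ)) τ := by
      have := ((hasDerivAt_id τ).const_mul (a ^ 2 - s)).exp
      simpa [mul_comm] using this
    have h4 := h3.mul h2
    have h5 : HasDerivAt (fun u => Real.sqrt s * Real.sqrt u)
        (Real.sqrt s * (1 / (2 * Real.sqrt τ))) τ := hsqrt.const_mul _
    have h6 : HasDerivAt (fun u => erfc (Real.sqrt s * Real.sqrt u))
        (-(2 / Real.sqrt π) * Real.exp (-(Real.sqrt s * Real.sqrt τ) ^ 2)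
          * (Real.sqrt s * (1 / (2 * Real.sqrt τ)))) τ :=
      (hasDerivAt_erfc _).comp τ h5
    have hFd := (h4.const_mul A).sub (h6.const_mul B)
    refine hFd.congr_deriv ?_
    symm
    -- algebra
    have e1 : (a * Real.sqrt τ) ^ 2 = a ^ 2 * τ := by
      rw [mul_pow, Real.sq_sqrt hτ0.le]
    have e2 : (Real.sqrt s * Real.sqrt τ) ^ 2 = s * τ := by
      rw [mul_pow, Real.sq_sqrt hs.le, Real.sq_sqrt hτ0.le]
    rw [e1, e2]
    have e3 : Real.exp ((a ^ 2 - s) * τ) = Real.exp (-s * τ) * Real.exp (a ^ 2 * τ) := by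
      rw [← Real.exp_add]; ring_nf
    have e4 : Real.exp (-(a ^ 2 * τ)) = (Real.exp (a ^ 2 * τ))⁻¹ := Real.exp_neg _
    have e5 : Real.exp (-(s * τ)) = Real.exp (-s * τ) := by rw [neg_mul]
    rw [e3, e4, e5]
    unfold f0 erfcx
    rw [e1]
    have hQ : Real.exp (a ^ 2 * τ) ≠ 0 := (Real.exp_pos _).ne'
    rw [hA, hB]
    field_simp
    ring_nf
    simp only [Real.sq_sqrt hs.le]
  -- nonneg
  have hpos : ∀ τ ∈ Set.Ioi (0:ℝ), 0 ≤ Real.exp (-s * τ) * f0 a τ := fun τ hτ =>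
    mul_nonneg (Real.exp_pos _).le (f0_nonneg a ha hτ)
  -- continuity at 0
  have hcont : ContinuousWithinAt F (Set.Ici 0) 0 := by
    apply Continuous.continuousWithinAt
    have c1 : Continuous fun u : ℝ => erfc (a * Real.sqrt u) :=
      continuous_erfc.comp (continuous_const.mul Real.continuous_sqrt)
    have c2 : Continuous fun u : ℝ => Real.exp ((a ^ 2 - s) * u) :=
      Real.continuous_exp.comp (continuous_const.mul continuous_id)
    have c3 : Continuous fun u : ℝ => erfc (Real.sqrt s * Real.sqrt u) :=
      continuous_erfc.comp (continuous_const.mul Real.continuous_sqrt)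
    exact (continuous_const.mul (c2.mul c1)).sub (continuous_const.mul c3)
  -- limit at infinity
  have hlim : Tendsto F atTop (𝓝 0) := by
    have hkey : ∀ᶠ τ : ℝ in atTop, ‖F τ‖ ≤
        |A| * (1 / (Real.sqrt π * a)) * Real.exp (-s * τ)
          + |B| / (Real.sqrt π * Real.sqrt s) * (Real.sqrt τ)⁻¹ := by
      filter_upwards [eventually_ge_atTop (1:ℝ)] with τ hτ1
      have hτ0 : (0:ℝ) < τ := lt_of_lt_of_le one_pos hτ1
      have hsτ : 0 < Real.sqrt τ := Real.sqrt_pos.2 hτ0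
      have hsτ1 : 1 ≤ Real.sqrt τ := by
        rw [show (1:ℝ) = Real.sqrt 1 by simp]; exact Real.sqrt_le_sqrt hτ1
      have e1 : (a * Real.sqrt τ) ^ 2 = a ^ 2 * τ := by rw [mul_pow, Real.sq_sqrt hτ0.le]
      have hterm1 : Real.exp ((a ^ 2 - s) * τ) * erfc (a * Real.sqrt τ)
          = Real.exp (-s * τ) * erfcx (a * Real.sqrt τ) := by
        unfold erfcx
        rw [e1, ← mul_assoc, ← Real.exp_add]
        ring_nf
      have hb1 : Real.exp (-s * τ) * erfcx (a * Real.sqrt τ)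
          ≤ Real.exp (-s * τ) * (1 / (Real.sqrt π * a)) := by
        apply mul_le_mul_of_nonneg_left _ (Real.exp_pos _).le
        calc erfcx (a * Real.sqrt τ) ≤ 1 / (Real.sqrt π * (a * Real.sqrt τ)) :=
              erfcx_le _ (by positivity)
          _ ≤ 1 / (Real.sqrt π * a) := by
              apply one_div_le_one_div_of_le (by positivity)
              calc Real.sqrt π * a = Real.sqrt π * a * 1 := by ring
                _ ≤ Real.sqrt π * a * Real.sqrt τ := by
                    apply mul_le_mul_of_nonneg_left hsτ1 (by positivity)
                _ = Real.sqrt π * (a * Real.sqrt τ) := by ring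
      have hb2 : erfc (Real.sqrt s * Real.sqrt τ)
          ≤ 1 / (Real.sqrt π * Real.sqrt s) * (Real.sqrt τ)⁻¹ := by
        calc erfc (Real.sqrt s * Real.sqrt τ)
            ≤ Real.exp (-(Real.sqrt s * Real.sqrt τ) ^ 2)
              / (Real.sqrt π * (Real.sqrt s * Real.sqrt τ)) := erfc_le _ (by positivity)
          _ ≤ 1 / (Real.sqrt π * (Real.sqrt s * Real.sqrt τ)) := by
              apply div_le_div_of_nonneg_right _ (by positivity)
              exact Real.exp_le_one_iff.2 (neg_nonpos.2 (sq_nonneg _))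
          _ = 1 / (Real.sqrt π * Real.sqrt s) * (Real.sqrt τ)⁻¹ := by
              field_simp
      have hF1 : ‖F τ‖ ≤ |A| * (Real.exp ((a ^ 2 - s) * τ) * erfc (a * Real.sqrt τ))
          + |B| * erfc (Real.sqrt s * Real.sqrt τ) := by
        rw [hF]
        calc ‖A * (Real.exp ((a ^ 2 - s) * τ) * erfc (a * Real.sqrt τ))
              - B * erfc (Real.sqrt s * Real.sqrt τ)‖
            ≤ ‖A * (Real.exp ((a ^ 2 - s) * τ) * erfc (a * Real.sqrt τ))‖
              + ‖B * erfc (Real.sqrt s * Real.sqrt τ)‖ := norm_sub_le _ _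
          _ = |A| * |Real.exp ((a ^ 2 - s) * τ) * erfc (a * Real.sqrt τ)|
              + |B| * |erfc (Real.sqrt s * Real.sqrt τ)| := by
              simp [abs_mul]
          _ = |A| * (Real.exp ((a ^ 2 - s) * τ) * erfc (a * Real.sqrt τ))
              + |B| * erfc (Real.sqrt s * Real.sqrt τ) := by
              rw [abs_of_nonneg (mul_nonneg (Real.exp_pos _).le (erfc_nonneg _)),
                abs_of_nonneg (erfc_nonneg _)]
      calc ‖F τ‖ ≤ |A| * (Real.exp ((a ^ 2 - s) * τ) * erfc (a * Real.sqrt τ))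
            + |B| * erfc (Real.sqrt s * Real.sqrt τ) := hF1
        _ ≤ |A| * (Real.exp (-s * τ) * (1 / (Real.sqrt π * a)))
            + |B| * (1 / (Real.sqrt π * Real.sqrt s) * (Real.sqrt τ)⁻¹) := by
            apply add_le_add
            · rw [hterm1]; exact mul_le_mul_of_nonneg_left hb1 (abs_nonneg _)
            · exact mul_le_mul_of_nonneg_left hb2 (abs_nonneg _)
        _ = |A| * (1 / (Real.sqrt π * a)) * Real.exp (-s * τ)
            + |B| / (Real.sqrt π * Real.sqrt s) * (Real.sqrt τ)⁻¹ := by ring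
    apply squeeze_zero_norm' hkey
    have t1 : Tendsto (fun τ : ℝ => |A| * (1 / (Real.sqrt π * a)) * Real.exp (-s * τ))
        atTop (𝓝 0) := by
      simpa using (exp_tendsto_zero hs).const_mul (|A| * (1 / (Real.sqrt π * a)))
    have t2 : Tendsto (fun τ : ℝ => |B| / (Real.sqrt π * Real.sqrt s) * (Real.sqrt τ)⁻¹)
        atTop (𝓝 0) := by
      have hst : Tendsto Real.sqrt atTop atTop := by
        apply tendsto_atTop_atTop.2
        intro b
        exact ⟨b ^ 2, fun x hx => by
          calc b ≤ |b| := le_abs_self b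
            _ = Real.sqrt (b ^ 2) := (Real.sqrt_sq_eq_abs b).symm
            _ ≤ Real.sqrt x := Real.sqrt_le_sqrt hx⟩
      have := (hst.inv_tendsto_atTop).const_mul (|B| / (Real.sqrt π * Real.sqrt s))
      simpa [Pi.inv_def] using this
    simpa using t1.add t2
  -- assemble
  have hint := integrableOn_Ioi_deriv_of_nonneg hcont hderiv hpos hlim
  have hval := integral_Ioi_of_hasDerivAt_of_nonneg hcont hderiv hpos hlim
  refine ⟨hint, ?_⟩
  rw [hval]
  have hF0 : F 0 = A - B := by
    rw [hF]
    simp [erfc_zero]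
  rw [hF0]
  have hsq : Real.sqrt s * Real.sqrt s = s := Real.mul_self_sqrt hs.le
  have hden : Real.sqrt s + a ≠ 0 := by positivity
  rw [hA, hB]
  field_simp
  nlinarith [hsq]

lemma continuous_erfcx : Continuous erfcx :=
  (Real.continuous_exp.comp (continuous_pow 2)).mul continuous_erfc

lemma f0_contOn (a : ℝ) : ContinuousOn (f0 a) (Set.Ioi 0) := by
  apply ContinuousOn.sub
  · apply ContinuousOn.div continuousOn_const
      (continuousOn_const.mul Real.continuous_sqrt.continuousOn)
    intro τ hτ
    have : 0 < Real.sqrt τ := Real.sqrt_pos.2 hτ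
    exact mul_ne_zero (Real.sqrt_pos.2 Real.pi_pos).ne' this.ne'
  · exact continuousOn_const.mul
      (continuous_erfcx.comp_continuousOn
        (continuousOn_const.mul Real.continuous_sqrt.continuousOn))

lemma core_all (a s : ℝ) (ha : 0 < a) (hs : 0 < s) :
    ∫ τ in Set.Ioi (0:ℝ), Real.exp (-s * τ) * f0 a τ = a / (Real.sqrt s + a) := by
  by_cases hne : s = a ^ 2
  · subst hne
    set l : Filter ℝ := 𝓝[≠] (a ^ 2) with hl
    have hmeas : ∀ᶠ s' in l, AEStronglyMeasurable (fun τ => Real.exp (-s' * τ) * f0 a τ)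
        (volume.restrict (Set.Ioi 0)) := by
      apply Eventually.of_forall
      intro s'
      exact (((Real.continuous_exp.comp (continuous_const.mul continuous_id)).continuousOn).mul
        (f0_contOn a)).aestronglyMeasurable measurableSet_Ioi
    have hbound : ∀ᶠ s' in l, ∀ᵐ τ ∂(volume.restrict (Set.Ioi 0)),
        ‖Real.exp (-s' * τ) * f0 a τ‖ ≤ Real.exp (-(a ^ 2 / 2) * τ) * f0 a τ := by
      have h1 : ∀ᶠ s' in l, a ^ 2 / 2 ≤ s' :=
        ((eventually_gt_nhds (by nlinarith : a ^ 2 / 2 < a ^ 2)).mono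
          fun x hx => hx.le).filter_mono nhdsWithin_le_nhds
      filter_upwards [h1] with s' hs'
      filter_upwards [ae_restrict_mem measurableSet_Ioi] with τ hτ
      have hτ0 : (0:ℝ) < τ := hτ
      rw [norm_mul, Real.norm_eq_abs, Real.norm_eq_abs, abs_of_pos (Real.exp_pos _),
        abs_of_nonneg (f0_nonneg a ha hτ0)]
      apply mul_le_mul_of_nonneg_right _ (f0_nonneg a ha hτ0)
      apply Real.exp_le_exp.2
      nlinarith
    have hbint : Integrable (fun τ => Real.exp (-(a ^ 2 / 2) * τ) * f0 a τ)
        (volume.restrict (Set.Ioi 0)) :=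
      (core a (a ^ 2 / 2) ha (by positivity) (by nlinarith [sq_nonneg a])).1
    have hlim : ∀ᵐ τ ∂(volume.restrict (Set.Ioi 0)),
        Tendsto (fun s' => Real.exp (-s' * τ) * f0 a τ) l
          (𝓝 (Real.exp (-(a ^ 2) * τ) * f0 a τ)) := by
      apply Eventually.of_forall
      intro τ
      have : ContinuousAt (fun s' : ℝ => Real.exp (-s' * τ) * f0 a τ) (a ^ 2) :=
        (Real.continuous_exp.comp ((continuous_id.neg).mul continuous_const)).continuousAt.mul
          continuousAt_const
      exact this.tendsto.mono_left nhdsWithin_le_nhds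
    have hL := tendsto_integral_filter_of_dominated_convergence _ hmeas hbound hbint hlim
    have heq : ∀ᶠ s' in l, (∫ τ in Set.Ioi (0:ℝ), Real.exp (-s' * τ) * f0 a τ)
        = a / (Real.sqrt s' + a) := by
      have h1 : ∀ᶠ s' in l, (0:ℝ) < s' :=
        (eventually_gt_nhds (by positivity : (0:ℝ) < a ^ 2)).filter_mono nhdsWithin_le_nhds
      have h2 : ∀ᶠ s' in l, s' ≠ a ^ 2 := self_mem_nhdsWithin
      filter_upwards [h1, h2] with s' hs' hne'
      exact (core a s' ha hs' hne').2
    have hR : Tendsto (fun s' : ℝ => a / (Real.sqrt s' + a)) l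
        (𝓝 (a / (Real.sqrt (a ^ 2) + a))) := by
      have hc : ContinuousAt (fun s' : ℝ => a / (Real.sqrt s' + a)) (a ^ 2) := by
        apply ContinuousAt.div continuousAt_const
          (Real.continuous_sqrt.continuousAt.add continuousAt_const)
        have : 0 ≤ Real.sqrt (a ^ 2) := Real.sqrt_nonneg _
        exact (add_pos_of_nonneg_of_pos this ha).ne'
      exact hc.tendsto.mono_left nhdsWithin_le_nhds
    exact tendsto_nhds_unique ((hL.congr' heq)) hR
  · exact (core a s ha hs hne).2

/-- the Laplace transform of `φ` is `κ_a / (κ_a + √(Ds))` for every `s > 0`. -/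
theorem phi_laplace_transform (D κa : ℝ) (hD : 0 < D) (hκa : 0 < κa) (s : ℝ) (hs : 0 < s) :
    ∫ τ in Set.Ioi (0 : ℝ), Real.exp (-s * τ) * phi D κa τ =
      κa / (κa + Real.sqrt (D * s)) := by
  have hsD : (0:ℝ) < Real.sqrt D := Real.sqrt_pos.2 hD
  set a : ℝ := κa / Real.sqrt D with ha'
  have ha : 0 < a := by positivity
  have hcongr : ∀ τ ∈ Set.Ioi (0:ℝ),
      Real.exp (-s * τ) * phi D κa τ = Real.exp (-s * τ) * f0 a τ := by
    intro τ hτ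
    have hτ0 : (0:ℝ) < τ := hτ
    congr 1
    unfold phi f0
    have e1 : Real.sqrt (π * D * τ) = Real.sqrt π * Real.sqrt D * Real.sqrt τ := by
      rw [Real.sqrt_mul (by positivity), Real.sqrt_mul Real.pi_pos.le]
    have e2 : κa * Real.sqrt (τ / D) = a * Real.sqrt τ := by
      rw [Real.sqrt_div hτ0.le, ha']
      ring
    have e3 : κa ^ 2 / D = a ^ 2 := by
      rw [ha', div_pow, Real.sq_sqrt hD.le]
    rw [e1, e2, e3, ha']
    have hπ : Real.sqrt π ≠ 0 := by positivity
    have hτs : Real.sqrt τ ≠ 0 := (Real.sqrt_pos.2 hτ0).ne'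
    field_simp
  rw [setIntegral_congr_fun measurableSet_Ioi hcongr, core_all a s ha hs]
  rw [Real.sqrt_mul hD.le]
  rw [ha']
  have hss : 0 < Real.sqrt s := Real.sqrt_pos.2 hs
  have h1 : Real.sqrt s + κa / Real.sqrt D ≠ 0 := by positivity
  have h2 : κa + Real.sqrt D * Real.sqrt s ≠ 0 := by positivity
  rw [div_div]
  congr 1
  field_simp
  ring
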